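/- Let n ≥ 1 and α, β : {1, …, n} → ℕ, and for δ : {1, …, n} → ℕ let G(δ) denote the disjoint union of δ(i) copies of the path P_i over all i ∈ {1, …, n}. Let Γ = {(i, γ) : 1 ≤ i ≤ n, γ : {1, …, n} → ℕ, Σ_{t=1}^{n} γ(t)·(t + 1) ≤ i + 1} (the pairs (i, γ) for which the linear forest G(γ) is isomorphic to an induced subgraph of P_i). Then G(α) is isomorphic to an induced subgraph of G(β) if and only if there exists x : Γ → ℕ with finite support such that, for every i ∈ {1, …, n}, Σ_{γ : (i, γ) ∈ Γ} x(i, γ) ≤ β(i), and, for every t ∈ {1, …, n}, Σ_{(i, γ) ∈ Γ} x(i, γ)·γ(t) ≥ α(t). -/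

import Mathlib

set_option maxHeartbeats 1000000

open SimpleGraph

/-- The vertex set of the linear forest with `δ i` copies of the path on
`i + 1` vertices, for each `i : Fin n` (so path sizes range over `1, …, n`):
a vertex is a triple (path index `i`, copy index `< δ i`, position `≤ i`). -/
def PFV (n : ℕ) (δ : Fin n → ℕ) : Type :=
  {v : Fin n × ℕ × ℕ // v.2.1 < δ v.1 ∧ v.2.2 ≤ (v.1 : ℕ)}

/-- The linear forest `G(δ)` consisting of the disjoint union of `δ i` copies
of the path `P_{i+1}` over all `i : Fin n`. -/
def PF (n : ℕ) (δ : Fin n → ℕ) : SimpleGraph (PFV n δ) :=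
  SimpleGraph.fromRel (fun x y =>
    x.1.1 = y.1.1 ∧ x.1.2.1 = y.1.2.1 ∧ y.1.2.2 = x.1.2.2 + 1)

lemma PF_adj {n : ℕ} {δ : Fin n → ℕ} {x y : PFV n δ} :
    (PF n δ).Adj x y ↔ x.1.1 = y.1.1 ∧ x.1.2.1 = y.1.2.1 ∧
      (y.1.2.2 = x.1.2.2 + 1 ∨ x.1.2.2 = y.1.2.2 + 1) := by
  show (x ≠ y ∧ _) ↔ _
  constructor
  · rintro ⟨hne, ⟨h1, h2, h3⟩ | ⟨h1, h2, h3⟩⟩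
    · exact ⟨h1, h2, Or.inl h3⟩
    · exact ⟨h1.symm, h2.symm, Or.inr h3⟩
  · rintro ⟨h1, h2, h3⟩
    refine ⟨fun he => ?_, ?_⟩
    · subst he; omega
    · rcases h3 with h3 | h3
      · exact Or.inl ⟨h1, h2, h3⟩
      · exact Or.inr ⟨h1.symm, h2.symm, h3⟩

lemma PFV_ext {n : ℕ} {δ : Fin n → ℕ} {x y : PFV n δ}
    (h1 : x.1.1 = y.1.1) (h2 : x.1.2.1 = y.1.2.1) (h3 : x.1.2.2 = y.1.2.2) : x = y :=
  Subtype.ext (Prod.ext h1 (Prod.ext h2 h3))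

/-- total vertex constructor -/
def vtx {n : ℕ} (α : Fin n → ℕ) (t : Fin n) (c : ℕ) (h : c < α t) (p : ℕ) : PFV n α :=
  ⟨(t, c, min p t), h, min_le_right _ _⟩

lemma comp_struct {n : ℕ} {α β : Fin n → ℕ} (f : PF n α ↪g PF n β) (t : Fin n) (c : ℕ) :
    ∃ (I : Fin n) (C S : ℕ), ∀ (h : c < α t),
      C < β I ∧ S + (t : ℕ) ≤ (I : ℕ) ∧
      (∀ p, p ≤ (t : ℕ) → (f (vtx α t c h p)).1.1 = I ∧ (f (vtx α t c h p)).1.2.1 = C ∧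
        S ≤ (f (vtx α t c h p)).1.2.2 ∧ (f (vtx α t c h p)).1.2.2 ≤ S + (t : ℕ)) ∧
      (∀ q, q ≤ (t : ℕ) → ∃ p, p ≤ (t : ℕ) ∧ (f (vtx α t c h p)).1.2.2 = S + q) := by
  by_cases h : c < α t
  swap
  · exact ⟨t, 0, 0, fun h' => absurd h' h⟩
  -- abbreviations
  set F : ℕ → PFV n β := fun p => f (vtx α t c h p) with hF
  have hvpos : ∀ p, p ≤ (t : ℕ) → (vtx α t c h p).1.2.2 = p := by
    intro p hp; simp only [vtx]; omega
  have hstep : ∀ p, p + 1 ≤ (t : ℕ) →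
      (F (p+1)).1.1 = (F p).1.1 ∧ (F (p+1)).1.2.1 = (F p).1.2.1 ∧
      ((F (p+1)).1.2.2 = (F p).1.2.2 + 1 ∨ (F p).1.2.2 = (F (p+1)).1.2.2 + 1) := by
    intro p hp
    have hadj : (PF n α).Adj (vtx α t c h p) (vtx α t c h (p+1)) := by
      rw [PF_adj]
      refine ⟨rfl, rfl, Or.inl ?_⟩
      show min (p+1) (t : ℕ) = min p (t : ℕ) + 1
      omega
    have := PF_adj.1 (f.map_rel_iff.2 hadj)
    exact ⟨this.1.symm, this.2.1.symm, this.2.2⟩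
  have hIC : ∀ p, p ≤ (t : ℕ) → (F p).1.1 = (F 0).1.1 ∧ (F p).1.2.1 = (F 0).1.2.1 := by
    intro p
    induction p with
    | zero => exact fun _ => ⟨rfl, rfl⟩
    | succ q ih =>
      intro hq
      obtain ⟨h1, h2, _⟩ := hstep q hq
      obtain ⟨h3, h4⟩ := ih (by omega)
      exact ⟨h1.trans h3, h2.trans h4⟩
  have hinj : ∀ p q, p ≤ (t : ℕ) → q ≤ (t : ℕ) →
      (F p).1.2.2 = (F q).1.2.2 → p = q := by
    intro p q hp hq hpq
    have : F p = F q := PFV_ext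
      (((hIC p hp).1).trans ((hIC q hq).1).symm)
      (((hIC p hp).2).trans ((hIC q hq).2).symm) hpq
    have := f.injective this
    have := congrArg (fun v : PFV n α => v.1.2.2) this
    simp only [vtx] at this
    omega
  -- monotonicity dichotomy
  have key : ∃ S, (∀ p, p ≤ (t : ℕ) → S ≤ (F p).1.2.2 ∧ (F p).1.2.2 ≤ S + (t : ℕ)) ∧
      (∀ q, q ≤ (t : ℕ) → ∃ p, p ≤ (t : ℕ) ∧ (F p).1.2.2 = S + q) := by
    rcases Nat.eq_zero_or_pos (t : ℕ) with ht | ht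
    · refine ⟨(F 0).1.2.2, ?_, ?_⟩
      · intro p hp
        have hp0 : p = 0 := by omega
        rw [hp0]; omega
      · intro q hq; exact ⟨0, by omega, by omega⟩
    rcases (hstep 0 ht).2.2 with hup | hdown
    · -- increasing
      have hstep' : ∀ p, p + 1 ≤ (t : ℕ) → (F (p+1)).1.2.2 = (F p).1.2.2 + 1 := by
        intro p
        induction p with
        | zero => exact fun _ => hup
        | succ q ih =>
          intro hq
          rcases (hstep (q+1) hq).2.2 with h1 | h1
          · exact h1
          · exfalso
            have h2 := ih (by omega)
            have h3 : (F (q+1+1)).1.2.2 = (F q).1.2.2 := by omega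
            have := hinj (q+1+1) q (by omega) (by omega) h3
            omega
      have hmono : ∀ p, p ≤ (t : ℕ) → (F p).1.2.2 = (F 0).1.2.2 + p := by
        intro p
        induction p with
        | zero => intro _; rfl
        | succ q ih =>
          intro hq
          have := hstep' q hq
          have := ih (by omega)
          omega
      refine ⟨(F 0).1.2.2, fun p hp => by have := hmono p hp; omega,
        fun q hq => ⟨q, hq, by have := hmono q hq; omega⟩⟩
    · -- decreasing
      have hstep' : ∀ p, p + 1 ≤ (t : ℕ) → (F p).1.2.2 = (F (p+1)).1.2.2 + 1 := by
        intro p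
        induction p with
        | zero => exact fun _ => hdown
        | succ q ih =>
          intro hq
          rcases (hstep (q+1) hq).2.2 with h1 | h1
          · exfalso
            have h2 := ih (by omega)
            have h3 : (F (q+1+1)).1.2.2 = (F q).1.2.2 := by omega
            have := hinj (q+1+1) q (by omega) (by omega) h3
            omega
          · exact h1
      have hmono : ∀ p, p ≤ (t : ℕ) → (F p).1.2.2 + p = (F 0).1.2.2 := by
        intro p
        induction p with
        | zero => intro _; rfl
        | succ q ih =>
          intro hq
          have := hstep' q hq
          have := ih (by omega)
          omega
      have hFt := hmono (t : ℕ) le_rfl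
      refine ⟨(F (t : ℕ)).1.2.2, fun p hp => by have := hmono p hp; omega,
        fun q hq => ⟨(t : ℕ) - q, by omega, by have := hmono ((t : ℕ) - q) (by omega); omega⟩⟩
  obtain ⟨S, hbound, hsurj⟩ := key
  refine ⟨(F 0).1.1, (F 0).1.2.1, S, fun h' => ?_⟩
  have hcopy : (F 0).1.2.1 < β ((F 0).1.1) := (F 0).2.1
  refine ⟨hcopy, ?_, fun p hp => ⟨(hIC p hp).1, (hIC p hp).2, hbound p hp⟩, hsurj⟩
  obtain ⟨p, hp, hpv⟩ := hsurj (t : ℕ) le_rfl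
  have h1 : (F p).1.2.2 ≤ ((F p).1.1 : ℕ) := (F p).2.2
  rw [(hIC p hp).1] at h1
  omega

lemma forward {n : ℕ} {α β : Fin n → ℕ} (f : PF n α ↪g PF n β) :
    ∃ x : Fin n → (Fin n → ℕ) → ℕ,
        (Function.support (Function.uncurry x)).Finite ∧
        (∀ (i : Fin n) (γ : Fin n → ℕ), x i γ ≠ 0 →
          ∑ t : Fin n, γ t * ((t : ℕ) + 2) ≤ (i : ℕ) + 2) ∧
        (∀ i : Fin n, (∑ᶠ γ : Fin n → ℕ, x i γ) ≤ β i) ∧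
        (∀ t : Fin n, α t ≤ ∑ᶠ (i : Fin n) (γ : Fin n → ℕ), x i γ * γ t) := by
  classical
  choose I C S hprop using comp_struct f
  -- basic separation facts
  have hsame : ∀ (t : Fin n) (c : ℕ) (h : c < α t) (t' : Fin n) (c' : ℕ) (h' : c' < α t')
      (p p' : ℕ), p ≤ (t : ℕ) → p' ≤ (t' : ℕ) →
      (f (vtx α t c h p)).1.2.2 = (f (vtx α t' c' h' p')).1.2.2 →
      I t c = I t' c' → C t c = C t' c' → t = t' ∧ c = c' := by
    intro t c h t' c' h' p p' hp hp' hpos hI hC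
    have e1 := (hprop t c h).2.2.1 p hp
    have e2 := (hprop t' c' h').2.2.1 p' hp'
    have : f (vtx α t c h p) = f (vtx α t' c' h' p') := by
      apply PFV_ext
      · rw [e1.1, e2.1, hI]
      · rw [e1.2.1, e2.2.1, hC]
      · exact hpos
    have := f.injective this
    have h1 := congrArg (fun v : PFV n α => v.1.1) this
    have h2 := congrArg (fun v : PFV n α => v.1.2.1) this
    exact ⟨h1, h2⟩
  have hnonadj : ∀ (t : Fin n) (c : ℕ) (h : c < α t) (t' : Fin n) (c' : ℕ) (h' : c' < α t')
      (p p' : ℕ), p ≤ (t : ℕ) → p' ≤ (t' : ℕ) → ¬(t = t' ∧ c = c') →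
      I t c = I t' c' → C t c = C t' c' →
      ¬((f (vtx α t' c' h' p')).1.2.2 = (f (vtx α t c h p)).1.2.2 + 1 ∨
        (f (vtx α t c h p)).1.2.2 = (f (vtx α t' c' h' p')).1.2.2 + 1) := by
    intro t c h t' c' h' p p' hp hp' hne hI hC hcon
    have e1 := (hprop t c h).2.2.1 p hp
    have e2 := (hprop t' c' h').2.2.1 p' hp'
    have hadj : (PF n β).Adj (f (vtx α t c h p)) (f (vtx α t' c' h' p')) := by
      rw [PF_adj]
      exact ⟨by rw [e1.1, e2.1, hI], by rw [e1.2.1, e2.2.1, hC], hcon⟩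
    have := PF_adj.1 (f.map_rel_iff.1 hadj)
    have h1 : t = t' := this.1
    have h2 : c = c' := by
      have := this.2.1
      simpa [vtx] using this
    exact hne ⟨h1, h2⟩
  -- interval separation
  have sep0 : ∀ (t : Fin n) (c : ℕ) (h : c < α t) (t' : Fin n) (c' : ℕ) (h' : c' < α t'),
      ¬(t = t' ∧ c = c') → I t c = I t' c' → C t c = C t' c' →
      S t c ≤ S t' c' → S t c + (t : ℕ) + 2 ≤ S t' c' := by
    intro t c h t' c' h' hne hI hC hle
    by_contra hcon
    -- then S t' c' ≤ S t c + t + 1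
    rcases Nat.lt_or_ge (S t' c') (S t c + (t : ℕ) + 1) with hlt | hge
    · -- S t' c' ≤ S t c + t : common position S t' c'
      obtain ⟨p, hp, hpv⟩ := (hprop t c h).2.2.2 (S t' c' - S t c) (by omega)
      obtain ⟨p', hp', hpv'⟩ := (hprop t' c' h').2.2.2 0 (by omega)
      have := hsame t c h t' c' h' p p' hp hp' (by omega) hI hC
      exact hne this
    · -- S t' c' = S t c + t + 1 : adjacent positions
      have hSe : S t' c' = S t c + (t : ℕ) + 1 := by omega
      obtain ⟨p, hp, hpv⟩ := (hprop t c h).2.2.2 (t : ℕ) le_rfl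
      obtain ⟨p', hp', hpv'⟩ := (hprop t' c' h').2.2.2 0 (by omega)
      exact hnonadj t c h t' c' h' p p' hp hp' hne hI hC (Or.inl (by omega))
  have sep : ∀ (t : Fin n) (c : ℕ) (h : c < α t) (t' : Fin n) (c' : ℕ) (h' : c' < α t'),
      ¬(t = t' ∧ c = c') → I t c = I t' c' → C t c = C t' c' →
      Disjoint (Finset.Icc (S t c) (S t c + (t : ℕ) + 1))
        (Finset.Icc (S t' c') (S t' c' + (t' : ℕ) + 1)) := by
    intro t c h t' c' h' hne hI hC
    rw [Finset.disjoint_left]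
    intro z hz hz'
    simp only [Finset.mem_Icc] at hz hz'
    rcases le_total (S t c) (S t' c') with hle | hle
    · have := sep0 t c h t' c' h' hne hI hC hle
      omega
    · have := sep0 t' c' h' t c h (fun ⟨e1, e2⟩ => hne ⟨e1.symm, e2.symm⟩) hI.symm hC.symm hle
      omega
  -- definitions
  set γFn : Fin n → ℕ → (Fin n → ℕ) := fun i cc t =>
    ((Finset.range (α t)).filter fun c => I t c = i ∧ C t c = cc).card with hγFn
  refine ⟨fun i γ => ((Finset.range (β i)).filter fun cc => γFn i cc = γ).card, ?_, ?_, ?_, ?_⟩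
  · -- finite support
    apply Set.Finite.subset (Set.finite_iUnion (fun i : Fin n =>
      (Set.finite_singleton i).prod (((Finset.range (β i)).image (γFn i)).finite_toSet)))
    rintro ⟨i, γ⟩ hmem
    have : ((Finset.range (β i)).filter fun cc => γFn i cc = γ).card ≠ 0 := hmem
    rw [Ne, Finset.card_eq_zero, ← Ne, ← Finset.nonempty_iff_ne_empty] at this
    obtain ⟨cc, hcc⟩ := this
    rw [Finset.mem_filter] at hcc
    refine Set.mem_iUnion.2 ⟨i, ⟨rfl, ?_⟩⟩
    exact Finset.mem_coe.2 (Finset.mem_image.2 ⟨cc, hcc.1, hcc.2⟩)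
  · -- packing
    intro i γ hx
    rw [Ne, Finset.card_eq_zero, ← Ne, ← Finset.nonempty_iff_ne_empty] at hx
    obtain ⟨cc, hcc⟩ := hx
    rw [Finset.mem_filter, Finset.mem_range] at hcc
    obtain ⟨hcc1, hcc2⟩ := hcc
    rw [← hcc2]
    -- the sigma finset of components mapped to copy (i, cc)
    set P : Finset ((_ : Fin n) × ℕ) := Finset.univ.sigma (fun t =>
      (Finset.range (α t)).filter fun c => I t c = i ∧ C t c = cc) with hP
    have hPmem : ∀ q : (_ : Fin n) × ℕ, q ∈ P ↔
        q.2 < α q.1 ∧ I q.1 q.2 = i ∧ C q.1 q.2 = cc := by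
      intro q
      rw [hP, Finset.mem_sigma, Finset.mem_filter, Finset.mem_range]
      simp [and_assoc]
    have step1 : ∑ t : Fin n, γFn i cc t * ((t : ℕ) + 2) = ∑ q ∈ P, ((q.1 : ℕ) + 2) := by
      rw [hP, Finset.sum_sigma]
      refine Finset.sum_congr rfl fun t _ => ?_
      simp [mul_comm]
      rfl
    have step2 : ∑ q ∈ P, ((q.1 : ℕ) + 2) =
        (P.biUnion fun q => Finset.Icc (S q.1 q.2) (S q.1 q.2 + (q.1 : ℕ) + 1)).card := by
      rw [Finset.card_biUnion]
      · refine (Finset.sum_congr rfl fun q _ => ?_).symm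
        rw [Nat.card_Icc]
        omega
      · intro q hq q' hq' hne
        rw [Finset.mem_coe, hPmem] at hq hq'
        refine sep q.1 q.2 hq.1 q'.1 q'.2 hq'.1 ?_ (hq.2.1.trans hq'.2.1.symm)
          (hq.2.2.trans hq'.2.2.symm)
        rintro ⟨e1, e2⟩
        exact hne (Sigma.ext e1 (heq_of_eq e2))
    rw [step1, step2]
    calc (P.biUnion fun q => Finset.Icc (S q.1 q.2) (S q.1 q.2 + (q.1 : ℕ) + 1)).card
        ≤ (Finset.range ((i : ℕ) + 2)).card := by
          apply Finset.card_le_card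
          intro z hz
          rw [Finset.mem_biUnion] at hz
          obtain ⟨q, hq, hzq⟩ := hz
          rw [hPmem] at hq
          rw [Finset.mem_Icc] at hzq
          rw [Finset.mem_range]
          have := (hprop q.1 q.2 hq.1).2.1
          have hIq : ((I q.1 q.2 : Fin n) : ℕ) = (i : ℕ) := by rw [hq.2.1]
          omega
      _ = (i : ℕ) + 2 := Finset.card_range _
  · -- copies bound
    intro i
    rw [finsum_eq_sum_of_support_subset _
      (s := (Finset.range (β i)).image (γFn i)) ?_]
    · rw [← Finset.card_eq_sum_card_fiberwise (fun cc hcc => Finset.mem_image_of_mem _ hcc),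
        Finset.card_range]
    · intro γ hγ
      have : ((Finset.range (β i)).filter fun cc => γFn i cc = γ).card ≠ 0 := hγ
      rw [Ne, Finset.card_eq_zero, ← Ne, ← Finset.nonempty_iff_ne_empty] at this
      obtain ⟨cc, hcc⟩ := this
      rw [Finset.mem_filter] at hcc
      exact Finset.mem_coe.2 (Finset.mem_image.2 ⟨cc, hcc.1, hcc.2⟩)
  · -- coverage
    intro t
    rw [finsum_eq_sum_of_fintype]
    have inner : ∀ i : Fin n,
        (∑ᶠ γ : Fin n → ℕ, ((Finset.range (β i)).filter fun cc => γFn i cc = γ).card * γ t)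
          = ∑ cc ∈ Finset.range (β i), γFn i cc t := by
      intro i
      rw [finsum_eq_sum_of_support_subset _
        (s := (Finset.range (β i)).image (γFn i)) ?_]
      · rw [← Finset.sum_fiberwise_of_maps_to (g := γFn i)
          (t := (Finset.range (β i)).image (γFn i)) (s := Finset.range (β i))
          (fun cc hcc => Finset.mem_image_of_mem _ hcc) (fun cc => γFn i cc t)]
        refine Finset.sum_congr rfl fun γ _ => ?_
        rw [Finset.sum_congr rfl (fun cc hcc => ?_), Finset.sum_const, smul_eq_mul]
        rw [Finset.mem_filter] at hcc
        rw [hcc.2]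
      · intro γ hγ
        have h1 : ((Finset.range (β i)).filter fun cc => γFn i cc = γ).card ≠ 0 := by
          intro hz
          apply hγ
          simp [hz]
        rw [Ne, Finset.card_eq_zero, ← Ne, ← Finset.nonempty_iff_ne_empty] at h1
        obtain ⟨cc, hcc⟩ := h1
        rw [Finset.mem_filter] at hcc
        exact Finset.mem_coe.2 (Finset.mem_image.2 ⟨cc, hcc.1, hcc.2⟩)
    rw [Finset.sum_congr rfl fun i _ => inner i]
    -- now count components of size t
    set T : Finset (Fin n × ℕ) := Finset.univ.biUnion (fun i =>
      (Finset.range (β i)).image fun cc => (i, cc)) with hT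
    have hcount : (Finset.range (α t)).card = ∑ q ∈ T, ((Finset.range (α t)).filter
        (fun c => (I t c, C t c) = q)).card := by
      apply Finset.card_eq_sum_card_fiberwise
      intro c hc
      rw [Finset.mem_coe, Finset.mem_range] at hc
      rw [Finset.mem_coe, hT, Finset.mem_biUnion]
      exact ⟨I t c, Finset.mem_univ _, Finset.mem_image.2 ⟨C t c,
        Finset.mem_range.2 (hprop t c hc).1, rfl⟩⟩
    have hsplit : ∑ q ∈ T, ((Finset.range (α t)).filter
        (fun c => (I t c, C t c) = q)).card =
        ∑ i : Fin n, ∑ cc ∈ Finset.range (β i), γFn i cc t := by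
      rw [hT, Finset.sum_biUnion, ]
      · refine Finset.sum_congr rfl fun i _ => ?_
        rw [Finset.sum_image (fun a _ b _ hab => by simpa using (Prod.ext_iff.1 hab).2)]
        refine Finset.sum_congr rfl fun cc _ => ?_
        congr 1
        apply Finset.filter_congr
        intro c _
        simp [Prod.ext_iff]
      · intro i _ j _ hij
        simp only [Finset.disjoint_left]
        intro a ha ha'
        rw [Finset.mem_image] at ha ha'
        obtain ⟨c1, _, e1⟩ := ha
        obtain ⟨c2, _, e2⟩ := ha'
        apply hij
        rw [← e1] at e2
        exact ((Prod.ext_iff.1 e2).1).symm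
    have heq : α t = ∑ i : Fin n, ∑ cc ∈ Finset.range (β i), γFn i cc t := by
      conv_lhs => rw [← Finset.card_range (α t)]
      rw [hcount, hsplit]
    exact heq.le

def base {n : ℕ} (γ : Fin n → ℕ) (t : Fin n) : ℕ :=
  ∑ t' ∈ Finset.univ.filter (fun t' => t' < t), γ t' * ((t' : ℕ) + 2)

def strt {n : ℕ} (γ : Fin n → ℕ) (t : Fin n) (k : ℕ) : ℕ :=
  base γ t + k * ((t : ℕ) + 2)

lemma base_lt {n : ℕ} {γ : Fin n → ℕ} {t t' : Fin n} (h : t < t') :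
    base γ t + γ t * ((t : ℕ) + 2) ≤ base γ t' := by
  have ht : t ∉ Finset.univ.filter (fun s => s < t) := by simp
  have hsub : insert t (Finset.univ.filter (fun s => s < t)) ⊆
      Finset.univ.filter (fun s => s < t') := by
    intro a ha
    rcases Finset.mem_insert.1 ha with rfl | ha
    · simp [h]
    · simp only [Finset.mem_filter, Finset.mem_univ, true_and] at ha ⊢
      exact ha.trans h
  calc base γ t + γ t * ((t : ℕ) + 2)
      = ∑ s ∈ insert t (Finset.univ.filter (fun s => s < t)), γ s * ((s : ℕ) + 2) := by
        rw [Finset.sum_insert ht, base]; ring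
    _ ≤ _ := Finset.sum_le_sum_of_subset hsub

lemma base_total {n : ℕ} {γ : Fin n → ℕ} (t : Fin n) :
    base γ t + γ t * ((t : ℕ) + 2) ≤ ∑ t' : Fin n, γ t' * ((t' : ℕ) + 2) := by
  have ht : t ∉ Finset.univ.filter (fun s => s < t) := by simp
  calc base γ t + γ t * ((t : ℕ) + 2)
      = ∑ s ∈ insert t (Finset.univ.filter (fun s => s < t)), γ s * ((s : ℕ) + 2) := by
        rw [Finset.sum_insert ht, base]; ring
    _ ≤ _ := Finset.sum_le_sum_of_subset (Finset.subset_univ _)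

lemma strt_bound {n : ℕ} {γ : Fin n → ℕ} {t : Fin n} {k : ℕ} (hk : k < γ t) :
    strt γ t k + ((t : ℕ) + 2) ≤ ∑ t' : Fin n, γ t' * ((t' : ℕ) + 2) := by
  refine le_trans ?_ (base_total t)
  have : (k + 1) * ((t : ℕ) + 2) ≤ γ t * ((t : ℕ) + 2) := Nat.mul_le_mul_right _ hk
  simp only [strt]
  nlinarith

lemma strt_sep {n : ℕ} {γ : Fin n → ℕ} {t t' : Fin n} {k k' : ℕ}
    (hk : k < γ t) (hk' : k' < γ t') (hne : ¬(t = t' ∧ k = k')) :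
    strt γ t k + ((t : ℕ) + 2) ≤ strt γ t' k' ∨
    strt γ t' k' + ((t' : ℕ) + 2) ≤ strt γ t k := by
  have haux : ∀ (a b : Fin n), a < b → ∀ j, j < γ a →
      strt γ a j + ((a : ℕ) + 2) ≤ strt γ b 0 := by
    intro a b hab j hj
    have h1 : (j + 1) * ((a : ℕ) + 2) ≤ γ a * ((a : ℕ) + 2) := Nat.mul_le_mul_right _ hj
    have h2 := base_lt (γ := γ) hab
    simp only [strt]
    nlinarith
  rcases lt_trichotomy t t' with h | h | h
  · left
    calc strt γ t k + ((t : ℕ) + 2) ≤ strt γ t' 0 := haux t t' h k hk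
      _ ≤ strt γ t' k' := by simp only [strt]; omega
  · subst h
    have hkk : k ≠ k' := fun he => hne ⟨rfl, he⟩
    rcases Nat.lt_or_ge k k' with hlt | hge
    · left
      simp only [strt]
      have : (k + 1) * ((t : ℕ) + 2) ≤ k' * ((t : ℕ) + 2) := Nat.mul_le_mul_right _ hlt
      nlinarith
    · right
      have hlt : k' < k := by omega
      simp only [strt]
      have : (k' + 1) * ((t : ℕ) + 2) ≤ k * ((t : ℕ) + 2) := Nat.mul_le_mul_right _ hlt
      nlinarith
  · right
    calc strt γ t' k' + ((t' : ℕ) + 2) ≤ strt γ t 0 := haux t' t h k' hk'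
      _ ≤ strt γ t k := by simp only [strt]; omega

lemma backward {n : ℕ} (α β : Fin n → ℕ) (x : Fin n → (Fin n → ℕ) → ℕ)
    (hfin : (Function.support (Function.uncurry x)).Finite)
    (hpack : ∀ (i : Fin n) (γ : Fin n → ℕ), x i γ ≠ 0 →
      ∑ t : Fin n, γ t * ((t : ℕ) + 2) ≤ (i : ℕ) + 2)
    (hcopies : ∀ i : Fin n, (∑ᶠ γ : Fin n → ℕ, x i γ) ≤ β i)
    (hcover : ∀ t : Fin n, α t ≤ ∑ᶠ (i : Fin n) (γ : Fin n → ℕ), x i γ * γ t) :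
    Nonempty (PF n α ↪g PF n β) := by
  classical
  have hsupfin : ∀ i : Fin n, (Function.support (x i)).Finite := by
    intro i
    have : Function.support (x i) = (fun γ => (i, γ)) ⁻¹' Function.support (Function.uncurry x) := by
      ext γ; simp [Function.uncurry, Function.mem_support]
    rw [this]
    exact Set.Finite.preimage (fun a _ b _ h => (Prod.ext_iff.1 h).2) hfin
  set Γi : (i : Fin n) → Finset (Fin n → ℕ) := fun i => (hsupfin i).toFinset with hΓi
  have hΓmem : ∀ i γ, γ ∈ Γi i ↔ x i γ ≠ 0 := by
    intro i γ; rw [hΓi, Set.Finite.mem_toFinset]; rfl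
  -- copy indices
  have hci : ∀ i : Fin n, ∃ ci : (Σ γ : (Γi i : Finset (Fin n → ℕ)), Fin (x i γ.1)) → ℕ,
      Function.Injective ci ∧ ∀ a, ci a < β i := by
    intro i
    have hcard : Fintype.card (Σ γ : (Γi i : Finset (Fin n → ℕ)), Fin (x i γ.1)) ≤
        Fintype.card (Fin (β i)) := by
      rw [Fintype.card_sigma, Fintype.card_fin]
      simp only [Fintype.card_fin]
      rw [Finset.univ_eq_attach, Finset.sum_attach (Γi i) (fun γ => x i γ)]
      rw [← finsum_eq_sum_of_support_subset (x i) (s := Γi i)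
        (by intro γ hγ; exact Finset.mem_coe.2 ((hΓmem i γ).2 hγ))]
      exact hcopies i
    obtain ⟨e⟩ := Function.Embedding.nonempty_of_card_le hcard
    exact ⟨fun a => (e a : ℕ), fun a b hab => e.injective (Fin.val_injective hab),
      fun a => (e a).2⟩
  choose ci hciinj hcilt using hci
  -- slots
  have het : ∀ t : Fin n, ∃ e : Fin (α t) →
      (Σ i : Fin n, Σ γ : (Γi i : Finset (Fin n → ℕ)), Fin (x i γ.1) × Fin (γ.1 t)),
      Function.Injective e := by
    intro t
    have hcard : Fintype.card (Fin (α t)) ≤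
        Fintype.card (Σ i : Fin n, Σ γ : (Γi i : Finset (Fin n → ℕ)),
          Fin (x i γ.1) × Fin (γ.1 t)) := by
      rw [Fintype.card_fin, Fintype.card_sigma]
      have : ∀ i : Fin n, Fintype.card (Σ γ : (Γi i : Finset (Fin n → ℕ)),
          Fin (x i γ.1) × Fin (γ.1 t)) = ∑ γ ∈ Γi i, x i γ * γ t := by
        intro i
        rw [Fintype.card_sigma]
        simp only [Fintype.card_prod, Fintype.card_fin]
        rw [Finset.univ_eq_attach, Finset.sum_attach (Γi i) (fun γ => x i γ * γ t)]
      rw [Finset.sum_congr rfl (fun i _ => this i)]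
      refine le_trans (hcover t) (le_of_eq ?_)
      rw [finsum_eq_sum_of_fintype]
      refine Finset.sum_congr rfl fun i _ => ?_
      exact finsum_eq_sum_of_support_subset _ (s := Γi i)
        (by intro γ hγ
            have : x i γ ≠ 0 := fun hz => by simp [Function.mem_support, hz] at hγ
            exact Finset.mem_coe.2 ((hΓmem i γ).2 this))
    obtain ⟨e⟩ := Function.Embedding.nonempty_of_card_le hcard
    exact ⟨e, e.injective⟩
  choose et hetinj using het
  -- flattened slot data
  set slotI : (t : Fin n) → Fin (α t) → Fin n := fun t k => (et t k).1 with hslotI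
  set slotC : (t : Fin n) → Fin (α t) → ℕ :=
    fun t k => ci (et t k).1 ⟨(et t k).2.1, (et t k).2.2.1⟩ with hslotC
  set slotS : (t : Fin n) → Fin (α t) → ℕ :=
    fun t k => strt (et t k).2.1.1 t ((et t k).2.2.2 : ℕ) with hslotS
  have hP0 : ∀ (t : Fin n) (k : Fin (α t)), slotC t k < β (slotI t k) :=
    fun t k => hcilt _ _
  have hP1 : ∀ (t : Fin n) (k : Fin (α t)), slotS t k + ((t : ℕ) + 2) ≤ (slotI t k : ℕ) + 2 := by
    intro t k
    have hγ : x (et t k).1 (et t k).2.1.1 ≠ 0 := (hΓmem _ _).1 (et t k).2.1.2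
    have h1 := strt_bound (γ := (et t k).2.1.1) (t := t) (k := ((et t k).2.2.2 : ℕ))
      (et t k).2.2.2.2
    exact le_trans h1 (hpack _ _ hγ)
  -- separation
  have hsepσ : ∀ (t t' : Fin n)
      (σ : Σ i : Fin n, Σ γ : (Γi i : Finset (Fin n → ℕ)), Fin (x i γ.1) × Fin (γ.1 t))
      (σ' : Σ i : Fin n, Σ γ : (Γi i : Finset (Fin n → ℕ)), Fin (x i γ.1) × Fin (γ.1 t')),
      (t ≠ t' ∨ ¬ HEq σ σ') → σ.1 = σ'.1 →
      ci σ.1 ⟨σ.2.1, σ.2.2.1⟩ = ci σ'.1 ⟨σ'.2.1, σ'.2.2.1⟩ →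
      strt σ.2.1.1 t (σ.2.2.2 : ℕ) + ((t : ℕ) + 2) ≤ strt σ'.2.1.1 t' (σ'.2.2.2 : ℕ) ∨
      strt σ'.2.1.1 t' (σ'.2.2.2 : ℕ) + ((t' : ℕ) + 2) ≤ strt σ.2.1.1 t (σ.2.2.2 : ℕ) := by
    intro t t' σ σ' hne hI hC
    obtain ⟨i1, γ1, m1, j1⟩ := σ
    obtain ⟨i2, γ2, m2, j2⟩ := σ'
    simp only at hI hC ⊢
    subst hI
    have hmk := hciinj i1 hC
    obtain ⟨hγe, hme⟩ := Sigma.mk.inj_iff.mp hmk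
    subst hγe
    have hme' : m1 = m2 := eq_of_heq hme
    subst hme'
    refine strt_sep j1.2 j2.2 ?_
    rintro ⟨hte, hje⟩
    subst hte
    have : j1 = j2 := Fin.val_injective hje
    subst this
    rcases hne with hne | hne
    · exact hne rfl
    · exact hne HEq.rfl
  have hsep : ∀ (t : Fin n) (k : Fin (α t)) (t' : Fin n) (k' : Fin (α t')),
      ¬(t = t' ∧ (k : ℕ) = (k' : ℕ)) → slotI t k = slotI t' k' → slotC t k = slotC t' k' →
      slotS t k + ((t : ℕ) + 2) ≤ slotS t' k' ∨
      slotS t' k' + ((t' : ℕ) + 2) ≤ slotS t k := by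
    intro t k t' k' hne hI hC
    by_cases hte : t = t'
    · subst hte
      have hkk : k ≠ k' := fun he => hne ⟨rfl, by rw [he]⟩
      exact hsepσ t t (et t k) (et t k') (Or.inr (fun he => hkk (hetinj t (eq_of_heq he))))
        hI hC
    · exact hsepσ t t' (et t k) (et t' k') (Or.inl hte) hI hC
  -- the embedding
  refine ⟨⟨⟨fun v => ⟨(slotI v.1.1 ⟨v.1.2.1, v.2.1⟩, slotC v.1.1 ⟨v.1.2.1, v.2.1⟩,
      slotS v.1.1 ⟨v.1.2.1, v.2.1⟩ + v.1.2.2),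
      hP0 _ _, by
        have h1 := hP1 v.1.1 ⟨v.1.2.1, v.2.1⟩
        have h2 : v.1.2.2 ≤ (v.1.1 : ℕ) := v.2.2
        show slotS v.1.1 ⟨v.1.2.1, v.2.1⟩ + v.1.2.2 ≤ ((slotI v.1.1 ⟨v.1.2.1, v.2.1⟩ : Fin n) : ℕ)
        omega⟩, ?_⟩, ?_⟩⟩
  · -- injectivity
    rintro ⟨⟨t1, c1, p1⟩, hb1, hp1⟩ ⟨⟨t2, c2, p2⟩, hb2, hp2⟩ h
    have hI : slotI t1 ⟨c1, hb1⟩ = slotI t2 ⟨c2, hb2⟩ :=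
      congrArg (fun z : PFV n β => z.1.1) h
    have hC : slotC t1 ⟨c1, hb1⟩ = slotC t2 ⟨c2, hb2⟩ :=
      congrArg (fun z : PFV n β => z.1.2.1) h
    have hS : slotS t1 ⟨c1, hb1⟩ + p1 = slotS t2 ⟨c2, hb2⟩ + p2 :=
      congrArg (fun z : PFV n β => z.1.2.2) h
    have hq1 : p1 ≤ (t1 : ℕ) := hp1
    have hq2 : p2 ≤ (t2 : ℕ) := hp2
    have hsame : t1 = t2 ∧ c1 = c2 := by
      by_contra hne
      have hne' : ¬(t1 = t2 ∧ ((⟨c1, hb1⟩ : Fin (α t1)) : ℕ) = ((⟨c2, hb2⟩ : Fin (α t2)) : ℕ)) := hne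
      rcases hsep t1 ⟨c1, hb1⟩ t2 ⟨c2, hb2⟩ hne' hI hC with hle | hle <;> omega
    obtain ⟨ht, hc⟩ := hsame
    subst ht
    have hk : (⟨c1, hb1⟩ : Fin (α t1)) = ⟨c2, hb2⟩ := Fin.ext hc
    rw [hk] at hS
    exact PFV_ext rfl hc ((by omega : p1 = p2))
  · -- map_rel_iff
    rintro ⟨⟨t1, c1, p1⟩, hb1, hp1⟩ ⟨⟨t2, c2, p2⟩, hb2, hp2⟩
    rw [PF_adj]
    refine Iff.trans ?_ PF_adj.symm
    change (slotI t1 ⟨c1, hb1⟩ = slotI t2 ⟨c2, hb2⟩ ∧ slotC t1 ⟨c1, hb1⟩ = slotC t2 ⟨c2, hb2⟩ ∧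
      (slotS t2 ⟨c2, hb2⟩ + p2 = slotS t1 ⟨c1, hb1⟩ + p1 + 1 ∨
        slotS t1 ⟨c1, hb1⟩ + p1 = slotS t2 ⟨c2, hb2⟩ + p2 + 1)) ↔
      (t1 = t2 ∧ c1 = c2 ∧ (p2 = p1 + 1 ∨ p1 = p2 + 1))
    constructor
    · rintro ⟨hI, hC, hpos⟩
      have hq1 : p1 ≤ (t1 : ℕ) := hp1
      have hq2 : p2 ≤ (t2 : ℕ) := hp2
      have hsame : t1 = t2 ∧ c1 = c2 := by
        by_contra hne
        have hne' : ¬(t1 = t2 ∧ ((⟨c1, hb1⟩ : Fin (α t1)) : ℕ) = ((⟨c2, hb2⟩ : Fin (α t2)) : ℕ)) := hne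
        rcases hsep t1 ⟨c1, hb1⟩ t2 ⟨c2, hb2⟩ hne' hI hC with hle | hle <;> omega
      obtain ⟨ht, hc⟩ := hsame
      subst ht
      have hk : (⟨c1, hb1⟩ : Fin (α t1)) = ⟨c2, hb2⟩ := Fin.ext hc
      rw [hk] at hpos
      exact ⟨rfl, hc, by omega⟩
    · rintro ⟨ht, hc, hpos⟩
      subst ht
      have hk : (⟨c1, hb1⟩ : Fin (α t1)) = ⟨c2, hb2⟩ := Fin.ext hc
      rw [hk]
      exact ⟨rfl, rfl, by omega⟩

/-- `G(α)` is an induced subgraph of `G(β)` iff the natural system of linear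
constraints is compatible.  Here `x i γ` is the number of copies of the linear
forest with `γ t` components `P_{t+1}` (for `t : Fin n`) packed into copies of
the path `P_{i+1}`; the packing condition `∑ t, γ t · (t + 2) ≤ i + 2` (in
`Fin`-indexing) says exactly that this forest is an induced subgraph of
`P_{i+1}`. -/
theorem linear_forest_embedding_iff_lp (n : ℕ) (hn : 1 ≤ n) (α β : Fin n → ℕ) :
    Nonempty (PF n α ↪g PF n β) ↔
      ∃ x : Fin n → (Fin n → ℕ) → ℕ,
        (Function.support (Function.uncurry x)).Finite ∧
        (∀ (i : Fin n) (γ : Fin n → ℕ), x i γ ≠ 0 →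
          ∑ t : Fin n, γ t * ((t : ℕ) + 2) ≤ (i : ℕ) + 2) ∧
        (∀ i : Fin n, (∑ᶠ γ : Fin n → ℕ, x i γ) ≤ β i) ∧
        (∀ t : Fin n, α t ≤ ∑ᶠ (i : Fin n) (γ : Fin n → ℕ), x i γ * γ t) := by
  constructor
  · rintro ⟨f⟩
    exact forward f
  · rintro ⟨x, h1, h2, h3, h4⟩
    exact backward α β x h1 h2 h3 h4
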